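/- Let (G, ω) be a filling of a finite pseudo-metric space (M, ρ) and let π be any tour of G. Then ω(G) ≥ p(M, ρ, π), the half-perimeter of (M, ρ) with respect to π. Consequently mf(M, ρ) ≥ p(M, ρ), the half-perimeter of the space. -/

import Mathlib

open SimpleGraph Finset

structure IsPseudoMetric {M : Type} (ρ : M → M → ℝ) : Prop where
  nonneg : ∀ p q, 0 ≤ ρ p q
  refl : ∀ p, ρ p p = 0
  symm : ∀ p q, ρ p q = ρ q p
  triangle : ∀ p q r, ρ p r ≤ ρ p q + ρ q r

/-- A tree joining a finite set `M`: a finite tree `G = (V, E)` with an injection `ι : M → V`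
such that every vertex of degree 1 or 2 lies in the image of `M`. -/
structure Frame (M : Type) where
  V : Type
  [fin : Fintype V]
  [deq : DecidableEq V]
  G : SimpleGraph V
  [dec : DecidableRel G.Adj]
  tree : G.IsTree
  ι : M → V
  inj : Function.Injective ι
  joins : ∀ v : V, G.degree v = 1 ∨ G.degree v = 2 → v ∈ Set.range ι

attribute [instance] Frame.fin Frame.deq Frame.dec

namespace Frame

variable {M : Type}

/-- The unique path between two vertices of the tree. -/
noncomputable def path (F : Frame M) (u v : F.V) : F.G.Walk u v :=
  (F.tree.existsUnique_path u v).exists.choose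

/-- `d_ω(u,v)`: the sum of the weights of the edges of the unique path from `u` to `v`. -/
noncomputable def dist (F : Frame M) (w : Sym2 F.V → ℝ) (u v : F.V) : ℝ :=
  ((F.path u v).edges.map w).sum

/-- `ω(G)`: the total weight of all edges of the tree. -/
noncomputable def weight (F : Frame M) (w : Sym2 F.V → ℝ) : ℝ :=
  ∑ e ∈ F.G.edgeFinset, w e

/-- `(G, ω)` is a filling of `(M, ρ)`: nonnegative weights and `ρ p q ≤ d_ω(ι p, ι q)`. -/
def IsFilling (F : Frame M) (w : Sym2 F.V → ℝ) (ρ : M → M → ℝ) : Prop :=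
  (∀ e ∈ F.G.edgeFinset, 0 ≤ w e) ∧
  ∀ p q : M, ρ p q ≤ F.dist w (F.ι p) (F.ι q)

end Frame

/-- `mf(M,ρ)`: the infimum of weights of fillings of `(M, ρ)`. -/
noncomputable def mf {M : Type} (ρ : M → M → ℝ) : ℝ :=
  sInf { x | ∃ F : Frame M, ∃ w : Sym2 F.V → ℝ, F.IsFilling w ρ ∧ F.weight w = x }

/-- A minimal filling: a filling whose weight equals `mf(M,ρ)`. -/
def IsMinFilling {M : Type} (F : Frame M) (w : Sym2 F.V → ℝ) (ρ : M → M → ℝ) : Prop :=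
  F.IsFilling w ρ ∧ F.weight w = mf ρ

/-- A cyclic order on `M`: a permutation acting transitively (a single cycle through all of `M`). -/
def IsCyclicOrder {M : Type} (π : Equiv.Perm M) : Prop :=
  ∀ p q : M, ∃ n : ℕ, (π ^ n) p = q

namespace Frame

variable {M : Type}

/-- The part of `M` lying, after removal of the edge `s(u,v)`, in the component of `u`. -/
def sideM (F : Frame M) (u v : F.V) : Set M :=
  { p : M | (F.G.deleteEdges {s(u, v)}).Reachable (F.ι p) u }

/-- `π` is a tour of `G` (a planar order): a cyclic order such that for every edge and
each part of the induced partition of `M` there is exactly one point leaving the part. -/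
def IsTour (F : Frame M) (π : Equiv.Perm M) : Prop :=
  IsCyclicOrder π ∧
  ∀ u v : F.V, F.G.Adj u v →
    ∃! p : M, p ∈ F.sideM u v ∧ π p ∉ F.sideM u v

end Frame

/-- The half-perimeter of `(M, ρ)` with respect to a cyclic order `π`. -/
noncomputable def halfPerim {M : Type} [Fintype M] (ρ : M → M → ℝ) (π : Equiv.Perm M) : ℝ :=
  (∑ p : M, ρ p (π p)) / 2

/-- The half-perimeter of the space: the minimum over all cyclic orders. -/
noncomputable def halfPerimSpace {M : Type} [Fintype M] (ρ : M → M → ℝ) : ℝ :=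
  sInf { x | ∃ σ : Equiv.Perm M, IsCyclicOrder σ ∧ x = halfPerim ρ σ }


section Aux

variable {V : Type} [Fintype V] [DecidableEq V]

lemma reach_trichotomy {G : SimpleGraph V} (u v : V) {a b : V} (W : G.Walk a b) :
    (G.deleteEdges {s(u,v)}).Reachable a b ∨
    ((G.deleteEdges {s(u,v)}).Reachable a u ∧ (G.deleteEdges {s(u,v)}).Reachable v b) ∨
    ((G.deleteEdges {s(u,v)}).Reachable a v ∧ (G.deleteEdges {s(u,v)}).Reachable u b) := by
  set G' := G.deleteEdges {s(u,v)} with hG'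
  induction W with
  | nil => exact Or.inl (Reachable.refl _)
  | @cons x y z h W ih =>
    by_cases he : s(x, y) = s(u, v)
    · rw [Sym2.eq_iff] at he
      rcases he with ⟨rfl, rfl⟩ | ⟨rfl, rfl⟩
      · rcases ih with h1 | ⟨h1, h2⟩ | ⟨h1, h2⟩
        · exact Or.inr (Or.inl ⟨Reachable.refl _, h1⟩)
        · exact Or.inr (Or.inl ⟨Reachable.refl _, h2⟩)
        · exact Or.inl h2
      · rcases ih with h1 | ⟨h1, h2⟩ | ⟨h1, h2⟩
        · exact Or.inr (Or.inr ⟨Reachable.refl _, h1⟩)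
        · exact Or.inl h2
        · exact Or.inl (h1.symm.trans h2)
    · have hxy : G'.Adj x y := by
        rw [hG', deleteEdges_adj]
        exact ⟨h, by simpa using he⟩
      rcases ih with h1 | ⟨h1, h2⟩ | ⟨h1, h2⟩
      · exact Or.inl (hxy.reachable.trans h1)
      · exact Or.inr (Or.inl ⟨hxy.reachable.trans h1, h2⟩)
      · exact Or.inr (Or.inr ⟨hxy.reachable.trans h1, h2⟩)

set_option linter.unusedSectionVars false

lemma reach_of_mem_support {G : SimpleGraph V} {a b y : V} (W : G.Walk a b)
    (hy : y ∈ W.support) : G.Reachable a y := ⟨W.takeUntil y hy⟩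

lemma detour {G : SimpleGraph V} {u v r : V} (huv : G.Adj u v)
    (hbr : ¬ (G.deleteEdges {s(u,v)}).Reachable u v)
    (Wa : (G.deleteEdges {s(u,v)}).Walk r r) (Wb : (G.deleteEdges {s(u,v)}).Walk v v)
    (hca : ∀ x, (G.deleteEdges {s(u,v)}).Reachable r x → x ∈ Wa.support)
    (hcb : ∀ x, (G.deleteEdges {s(u,v)}).Reachable v x → x ∈ Wb.support)
    (hna : ∀ e, Wa.edges.count e ≤ 2) (hnb : ∀ e, Wb.edges.count e ≤ 2)
    (hru : (G.deleteEdges {s(u,v)}).Reachable r u) :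
    ∃ W : G.Walk r r, (∀ x, G.Reachable r x → x ∈ W.support) ∧ (∀ e, W.edges.count e ≤ 2) := by
  have hle : G.deleteEdges {s(u,v)} ≤ G := SimpleGraph.deleteEdges_le _
  have h₁ : ∀ e ∈ Wa.edges, e ∈ G.edgeSet := fun e he =>
    SimpleGraph.edgeSet_mono hle (Wa.edges_subset_edgeSet he)
  have h₂ : ∀ e ∈ Wb.edges, e ∈ G.edgeSet := fun e he =>
    SimpleGraph.edgeSet_mono hle (Wb.edges_subset_edgeSet he)
  have hnotuv₁ : s(u,v) ∉ Wa.edges := fun h => by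
    have := Wa.edges_subset_edgeSet h
    rw [edgeSet_deleteEdges] at this
    exact this.2 rfl
  have hnotuv₂ : s(u,v) ∉ Wb.edges := fun h => by
    have := Wb.edges_subset_edgeSet h
    rw [edgeSet_deleteEdges] at this
    exact this.2 rfl
  set W₁' : G.Walk r r := Wa.transfer G h₁ with hW₁'
  set W₂' : G.Walk v v := Wb.transfer G h₂ with hW₂'
  have hu : u ∈ W₁'.support := by
    rw [hW₁', SimpleGraph.Walk.support_transfer]
    exact hca u hru
  set T : G.Walk r u := W₁'.takeUntil u hu with hT
  set D : G.Walk u r := W₁'.dropUntil u hu with hD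
  set seg : G.Walk u u := SimpleGraph.Walk.cons huv (W₂'.concat huv.symm) with hseg
  refine ⟨(T.append seg).append D, ?_, ?_⟩
  · intro x hx
    obtain ⟨Wx⟩ := hx
    rcases reach_trichotomy u v Wx with h | ⟨h1, h2⟩ | ⟨h1, h2⟩
    · have : x ∈ W₁'.support := by
        rw [hW₁', SimpleGraph.Walk.support_transfer]; exact hca x h
      rw [← W₁'.take_spec hu] at this
      rw [SimpleGraph.Walk.mem_support_append_iff] at this ⊢
      rw [SimpleGraph.Walk.mem_support_append_iff]
      tauto
    · have hx2 : x ∈ W₂'.support := by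
        rw [hW₂', SimpleGraph.Walk.support_transfer]; exact hcb x h2
      have : x ∈ seg.support := by
        rw [hseg, SimpleGraph.Walk.support_cons, SimpleGraph.Walk.support_concat]
        exact List.mem_cons_of_mem _ (by exact List.mem_append_left _ hx2)
      rw [SimpleGraph.Walk.mem_support_append_iff, SimpleGraph.Walk.mem_support_append_iff]
      tauto
    · exact absurd (hru.symm.trans h1) hbr
  · intro e
    have hsw : s(v,u) = s(u,v) := Sym2.eq_swap
    have hedges : ((T.append seg).append D).edges
        = (T.edges ++ (s(u,v) :: (W₂'.edges ++ [s(u,v)]))) ++ D.edges := by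
      rw [SimpleGraph.Walk.edges_append, SimpleGraph.Walk.edges_append, hseg,
        SimpleGraph.Walk.edges_cons, SimpleGraph.Walk.edges_concat, List.concat_eq_append, hsw]
    have hTD : T.edges ++ D.edges = Wa.edges := by
      rw [hT, hD, ← SimpleGraph.Walk.edges_append, W₁'.take_spec hu,
        hW₁', SimpleGraph.Walk.edges_transfer]
    have hW₂e : W₂'.edges = Wb.edges := SimpleGraph.Walk.edges_transfer _ _
    have hcnt : ((T.append seg).append D).edges.count e
        = T.edges.count e + ((s(u,v) :: (W₂'.edges ++ [s(u,v)])).count e) + D.edges.count e := by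
      rw [hedges, List.count_append, List.count_append]
    rw [hcnt]
    by_cases he : e = s(u,v)
    · subst he
      have c1 : Wa.edges.count s(u,v) = 0 := List.count_eq_zero.2 hnotuv₁
      have c2 : Wb.edges.count s(u,v) = 0 := List.count_eq_zero.2 hnotuv₂
      have cT : T.edges.count s(u,v) + D.edges.count s(u,v) = 0 := by
        rw [← List.count_append, hTD, c1]
      have hmid : (s(u,v) :: (W₂'.edges ++ [s(u,v)])).count s(u,v) = 2 := by
        rw [List.count_cons_self, List.count_append, hW₂e, c2]
        simp
      omega
    · have hmid : (s(u,v) :: (W₂'.edges ++ [s(u,v)])).count e = Wb.edges.count e := by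
        rw [List.count_cons_of_ne (Ne.symm he), List.count_append, hW₂e]
        simp [List.count_singleton, he, Ne.symm he]
      have key : Wa.edges.count e = 0 ∨ Wb.edges.count e = 0 := by
        by_cases k1 : e ∈ Wa.edges
        · right
          rw [List.count_eq_zero]
          intro k2
          induction e using Sym2.ind with
          | _ a b =>
            have ha1 : a ∈ Wa.support := Wa.fst_mem_support_of_mem_edges k1
            have ha2 : a ∈ Wb.support := Wb.fst_mem_support_of_mem_edges k2
            exact hbr (hru.symm.trans ((reach_of_mem_support Wa ha1).trans
              (reach_of_mem_support Wb ha2).symm))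
        · left; exact List.count_eq_zero.2 k1
      have hTDe : T.edges.count e + D.edges.count e = Wa.edges.count e := by
        rw [← List.count_append, hTD]
      have := hna e; have := hnb e
      omega

lemma exists_cover_walk : ∀ (n : ℕ) (G : SimpleGraph V), G.IsAcyclic → G.edgeSet.ncard ≤ n →
    ∀ r : V, ∃ W : G.Walk r r, (∀ x, G.Reachable r x → x ∈ W.support) ∧
      (∀ e, W.edges.count e ≤ 2) := by
  intro n
  induction n with
  | zero =>
    intro G hA hcard r
    have hE : G.edgeSet = ∅ := by
      rw [← Set.ncard_eq_zero (G.edgeSet.toFinite)]; omega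
    rw [SimpleGraph.edgeSet_eq_empty] at hE
    subst hE
    refine ⟨SimpleGraph.Walk.nil, fun x hx => ?_, fun e => by simp⟩
    rw [SimpleGraph.reachable_bot] at hx
    subst hx; simp
  | succ n ih =>
    intro G hA hcard r
    by_cases hE : G.edgeSet = ∅
    · rw [SimpleGraph.edgeSet_eq_empty] at hE
      subst hE
      refine ⟨SimpleGraph.Walk.nil, fun x hx => ?_, fun e => by simp⟩
      rw [SimpleGraph.reachable_bot] at hx
      subst hx; simp
    · obtain ⟨e, he⟩ := Set.nonempty_iff_ne_empty.2 hE
      induction e using Sym2.ind with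
      | _ u v =>
      rw [SimpleGraph.mem_edgeSet] at he
      -- facts for an arbitrary single deleted edge
      have main : ∀ (a b : V), G.Adj a b → ∀ r' : V,
          ∃ W : (G.deleteEdges {s(a,b)}).Walk r' r',
            (∀ x, (G.deleteEdges {s(a,b)}).Reachable r' x → x ∈ W.support) ∧
            (∀ e, W.edges.count e ≤ 2) := by
        intro a b hab r'
        apply ih
        · intro x c hc
          exact hA (c.transfer G (fun e' he' => SimpleGraph.edgeSet_mono
            (SimpleGraph.deleteEdges_le _) (c.edges_subset_edgeSet he'))) (hc.transfer _)
        · rw [edgeSet_deleteEdges]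
          have h1 : s(a,b) ∈ G.edgeSet := hab
          have := Set.ncard_diff_singleton_lt_of_mem h1 G.edgeSet.toFinite
          omega
      have hbr : ∀ (a b : V), G.Adj a b → ¬ (G.deleteEdges {s(a,b)}).Reachable a b := by
        intro a b hab
        have := SimpleGraph.isBridge_iff.mp (SimpleGraph.isAcyclic_iff_forall_adj_isBridge.mp hA hab)
        exact this
      by_cases hru : (G.deleteEdges {s(u,v)}).Reachable r u
      · obtain ⟨Wa, hca, hna⟩ := main u v he r
        obtain ⟨Wb, hcb, hnb⟩ := main u v he v
        exact detour he (hbr u v he) Wa Wb hca hcb hna hnb hru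
      · by_cases hrv : (G.deleteEdges {s(v,u)}).Reachable r v
        · obtain ⟨Wa, hca, hna⟩ := main v u he.symm r
          obtain ⟨Wb, hcb, hnb⟩ := main v u he.symm u
          exact detour he.symm (hbr v u he.symm) Wa Wb hca hcb hna hnb hrv
        · obtain ⟨Wa, hca, hna⟩ := main u v he r
          have hle : G.deleteEdges {s(u,v)} ≤ G := SimpleGraph.deleteEdges_le _
          have h₁ : ∀ e' ∈ Wa.edges, e' ∈ G.edgeSet := fun e' he' =>
            SimpleGraph.edgeSet_mono hle (Wa.edges_subset_edgeSet he')
          refine ⟨Wa.transfer G h₁, fun x hx => ?_, fun e' => by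
            rw [SimpleGraph.Walk.edges_transfer]; exact hna e'⟩
          rw [SimpleGraph.Walk.support_transfer]
          obtain ⟨Wx⟩ := hx
          have hswap : (G.deleteEdges {s(v,u)}) = (G.deleteEdges {s(u,v)}) := by
            rw [Sym2.eq_swap]
          rw [hswap] at hrv
          rcases reach_trichotomy u v Wx with h | ⟨h1, h2⟩ | ⟨h1, h2⟩
          · exact hca x h
          · exact absurd h1 hru
          · exact absurd h1 hrv

end Aux

namespace Frame
variable {M : Type} [Fintype M] (F : Frame M)

lemma path_isPath (u v : F.V) : (F.path u v).IsPath :=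
  (F.tree.existsUnique_path u v).exists.choose_spec

lemma path_unique {u v : F.V} (p : F.G.Walk u v) (hp : p.IsPath) : p = F.path u v :=
  (F.tree.existsUnique_path u v).unique hp (F.path_isPath u v)

lemma path_self (u : F.V) : F.path u u = SimpleGraph.Walk.nil :=
  (F.path_unique SimpleGraph.Walk.nil (SimpleGraph.Walk.IsPath.nil)).symm

lemma dist_self (u : F.V) : F.dist w u u = 0 := by
  rw [Frame.dist, path_self]; simp

lemma edge_mem_path_iff {e : Sym2 F.V} {a b : F.V} :
    e ∈ (F.path a b).edges ↔ ¬ (F.G.deleteEdges {e}).Reachable a b := by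
  constructor
  · intro hmem hreach
    obtain ⟨W'⟩ := hreach
    have h1 : ∀ e' ∈ W'.edges, e' ∈ F.G.edgeSet := fun e' he' =>
      SimpleGraph.edgeSet_mono (SimpleGraph.deleteEdges_le _) (W'.edges_subset_edgeSet he')
    set W : F.G.Walk a b := W'.transfer F.G h1 with hW
    have hP : (W.toPath : F.G.Walk a b) = F.path a b :=
      F.path_unique _ (W.toPath).2
    have hsub : (W.toPath : F.G.Walk a b).edges ⊆ W.edges :=
      SimpleGraph.Walk.edges_toPath_subset W
    rw [hP] at hsub
    have : e ∈ W.edges := hsub hmem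
    rw [hW, SimpleGraph.Walk.edges_transfer] at this
    have := W'.edges_subset_edgeSet this
    rw [SimpleGraph.edgeSet_deleteEdges] at this
    exact this.2 rfl
  · intro h
    by_contra hmem
    apply h
    have hsub : ∀ e' ∈ (F.path a b).edges, e' ∈ (F.G.deleteEdges {e}).edgeSet := by
      intro e' he'
      rw [SimpleGraph.edgeSet_deleteEdges]
      exact ⟨(F.path a b).edges_subset_edgeSet he', by
        simp only [Set.mem_singleton_iff]
        exact fun hh => hmem (hh ▸ he')⟩
    exact ⟨(F.path a b).transfer _ hsub⟩

lemma not_reach_of_adj {u v : F.V} (huv : F.G.Adj u v) :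
    ¬ (F.G.deleteEdges {s(u,v)}).Reachable u v :=
  SimpleGraph.isBridge_iff.mp (SimpleGraph.isAcyclic_iff_forall_adj_isBridge.mp F.tree.IsAcyclic huv)

lemma side_dichotomy {u v : F.V} (huv : F.G.Adj u v) (x : F.V) :
    (F.G.deleteEdges {s(u,v)}).Reachable x u ∨ (F.G.deleteEdges {s(u,v)}).Reachable x v := by
  obtain ⟨W⟩ := F.tree.isConnected.preconnected x u
  rcases reach_trichotomy u v W with h | ⟨h1, h2⟩ | ⟨h1, h2⟩
  · exact Or.inl h
  · exact Or.inl h1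
  · exact Or.inr h1

lemma side_not_both {u v : F.V} (huv : F.G.Adj u v) (x : F.V) :
    ¬ ((F.G.deleteEdges {s(u,v)}).Reachable x u ∧ (F.G.deleteEdges {s(u,v)}).Reachable x v) :=
  fun ⟨h1, h2⟩ => F.not_reach_of_adj huv (h1.symm.trans h2)

lemma edge_mem_path_iff_sides {u v : F.V} (huv : F.G.Adj u v) (a b : F.V) :
    s(u,v) ∈ (F.path a b).edges ↔
      ¬ ((F.G.deleteEdges {s(u,v)}).Reachable a u ↔ (F.G.deleteEdges {s(u,v)}).Reachable b u) := by
  rw [F.edge_mem_path_iff]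
  constructor
  · intro h hiff
    apply h
    rcases F.side_dichotomy huv a with ha | ha
    · exact (ha).trans (hiff.mp ha).symm
    · rcases F.side_dichotomy huv b with hb | hb
      · exact absurd (hiff.mpr hb) (fun hau => F.side_not_both huv a ⟨hau, ha⟩)
      · exact ha.trans hb.symm
  · intro h hreach
    apply h
    constructor
    · intro ha; exact hreach.symm.trans ha
    · intro hb; exact hreach.trans hb

lemma mem_sideM_iff {u v : F.V} (p : M) :
    p ∈ F.sideM u v ↔ (F.G.deleteEdges {s(u,v)}).Reachable (F.ι p) u := Iff.rfl

lemma mem_sideM_swap_iff {u v : F.V} (huv : F.G.Adj u v) (p : M) :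
    p ∈ F.sideM v u ↔ ¬ (F.G.deleteEdges {s(u,v)}).Reachable (F.ι p) u := by
  have hswap : (F.G.deleteEdges {s(v,u)}) = (F.G.deleteEdges {s(u,v)}) := by rw [Sym2.eq_swap]
  rw [mem_sideM_iff]
  rw [hswap]
  constructor
  · intro h hc; exact F.side_not_both huv (F.ι p) ⟨hc, h⟩
  · intro h
    rcases F.side_dichotomy huv (F.ι p) with h' | h'
    · exact absurd h' h
    · exact h'

open scoped Classical in
lemma crossing_card {u v : F.V} (huv : F.G.Adj u v) {π : Equiv.Perm M} (hπ : F.IsTour π) :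
    (Finset.univ.filter fun p => s(u,v) ∈ (F.path (F.ι p) (F.ι (π p))).edges).card = 2 := by
  obtain ⟨-, htour⟩ := hπ
  obtain ⟨a, ⟨haS, haT⟩, ha⟩ := htour u v huv
  obtain ⟨b, ⟨hbS, hbT⟩, hb⟩ := htour v u huv.symm
  rw [F.mem_sideM_swap_iff huv] at hbS
  rw [F.mem_sideM_swap_iff huv] at hbT
  rw [F.mem_sideM_iff] at haS
  rw [F.mem_sideM_iff] at haT
  push_neg at hbT
  have hab : a ≠ b := fun h => hbS (h ▸ haS)
  have hcond : ∀ p : M, (s(u,v) ∈ (F.path (F.ι p) (F.ι (π p))).edges) ↔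
      ((p ∈ F.sideM u v ∧ π p ∉ F.sideM u v) ∨ (p ∈ F.sideM v u ∧ π p ∉ F.sideM v u)) := by
    intro p
    rw [F.edge_mem_path_iff_sides huv]
    rw [F.mem_sideM_swap_iff huv, F.mem_sideM_swap_iff huv, F.mem_sideM_iff, F.mem_sideM_iff]
    tauto
  have hset : (Finset.univ.filter fun p => s(u,v) ∈ (F.path (F.ι p) (F.ι (π p))).edges)
      = {a, b} := by
    ext p
    simp only [Finset.mem_filter, Finset.mem_univ, true_and, Finset.mem_insert,
      Finset.mem_singleton, hcond p]
    constructor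
    · rintro (h | h)
      · exact Or.inl (ha p h)
      · exact Or.inr (hb p h)
    · rintro (rfl | rfl)
      · exact Or.inl ⟨haS, haT⟩
      · refine Or.inr ⟨?_, ?_⟩
        · rw [F.mem_sideM_swap_iff huv]; exact hbS
        · rw [F.mem_sideM_swap_iff huv]; push_neg; exact hbT
  rw [hset, Finset.card_insert_of_notMem (by simpa using hab), Finset.card_singleton]

lemma dist_eq_sum_ite (w : Sym2 F.V → ℝ) (a b : F.V) [DecidablePred (· ∈ (F.path a b).edges)] :
    F.dist w a b = ∑ e ∈ F.G.edgeFinset, (if e ∈ (F.path a b).edges then w e else 0) := by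
  rw [Frame.dist]
  rw [Finset.sum_list_map_count]
  have h1 : ∀ e ∈ (F.path a b).edges.toFinset,
      (F.path a b).edges.count e • w e = w e := by
    intro e he
    rw [List.count_eq_one_of_mem (F.path_isPath a b).edges_nodup (List.mem_toFinset.mp he),
      one_smul]
  rw [Finset.sum_congr rfl h1]
  have h2 : ∀ e : Sym2 F.V, (if e ∈ (F.path a b).edges then w e else 0)
      = (if e ∈ (F.path a b).edges.toFinset then w e else 0) := by
    intro e; simp [List.mem_toFinset]
  rw [Finset.sum_congr rfl (fun e _ => h2 e), Finset.sum_ite_mem]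
  rw [Finset.inter_eq_right.mpr]
  intro e he
  rw [SimpleGraph.mem_edgeFinset]
  exact (F.path a b).edges_subset_edgeSet (List.mem_toFinset.mp he)

open scoped Classical in
lemma sum_dist_eq (w : Sym2 F.V → ℝ) {π : Equiv.Perm M} (hπ : F.IsTour π) :
    ∑ p : M, F.dist w (F.ι p) (F.ι (π p)) = 2 * F.weight w := by
  have h1 : ∀ p : M, F.dist w (F.ι p) (F.ι (π p))
      = ∑ e ∈ F.G.edgeFinset, (if e ∈ (F.path (F.ι p) (F.ι (π p))).edges then w e else 0) :=
    fun p => F.dist_eq_sum_ite w _ _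
  rw [Finset.sum_congr rfl (fun p _ => h1 p), Finset.sum_comm]
  rw [Frame.weight, Finset.mul_sum]
  apply Finset.sum_congr rfl
  intro e he
  rw [← Finset.sum_filter]
  rw [Finset.sum_const]
  have hcard : (Finset.univ.filter fun p => e ∈ (F.path (F.ι p) (F.ι (π p))).edges).card = 2 := by
    induction e using Sym2.ind with
    | _ u v =>
      have huv : F.G.Adj u v := SimpleGraph.mem_edgeFinset.mp he
      have := F.crossing_card huv hπ
      convert this using 2
  rw [hcard]
  simp [mul_comm]

end Frame

theorem part1 {M : Type} [Fintype M] (ρ : M → M → ℝ) (F : Frame M) (w : Sym2 F.V → ℝ)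
    (hf : F.IsFilling w ρ) (π : Equiv.Perm M) (hπ : F.IsTour π) :
    halfPerim ρ π ≤ F.weight w := by
  rw [halfPerim, div_le_iff₀ (by norm_num : (0:ℝ) < 2)]
  calc ∑ p : M, ρ p (π p) ≤ ∑ p : M, F.dist w (F.ι p) (F.ι (π p)) :=
        Finset.sum_le_sum (fun p _ => hf.2 p (π p))
    _ = 2 * F.weight w := F.sum_dist_eq w hπ
    _ = F.weight w * 2 := mul_comm _ _

namespace Frame
variable {M : Type} [Fintype M] (F : Frame M)

lemma dist_nonneg (w : Sym2 F.V → ℝ) (hw : ∀ e ∈ F.G.edgeFinset, 0 ≤ w e) (a b : F.V) :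
    0 ≤ F.dist w a b := by
  rw [Frame.dist]
  apply List.sum_nonneg
  intro x hx
  obtain ⟨e, he, rfl⟩ := List.mem_map.mp hx
  exact hw e (SimpleGraph.mem_edgeFinset.mpr ((F.path a b).edges_subset_edgeSet he))

lemma dist_le_wlen (w : Sym2 F.V → ℝ) (hw : ∀ e ∈ F.G.edgeFinset, 0 ≤ w e) {a b : F.V}
    (W : F.G.Walk a b) : F.dist w a b ≤ (W.edges.map w).sum := by
  classical
  have hsub : ∀ e ∈ (F.path a b).edges, e ∈ W.edges := by
    intro e he
    by_contra hmem
    have : (F.G.deleteEdges {e}).Reachable a b := by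
      refine ⟨W.transfer _ ?_⟩
      intro e' he'
      rw [SimpleGraph.edgeSet_deleteEdges]
      exact ⟨W.edges_subset_edgeSet he', by
        simp only [Set.mem_singleton_iff]; exact fun hh => hmem (hh ▸ he')⟩
    exact (F.edge_mem_path_iff.mp he) this
  rw [Frame.dist, Finset.sum_list_map_count, Finset.sum_list_map_count]
  have h1 : ∀ e ∈ (F.path a b).edges.toFinset,
      (F.path a b).edges.count e • w e ≤ W.edges.count e • w e := by
    intro e he
    rw [List.count_eq_one_of_mem (F.path_isPath a b).edges_nodup (List.mem_toFinset.mp he)]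
    have h2 : 1 ≤ W.edges.count e := List.one_le_count_iff.mpr (hsub e (List.mem_toFinset.mp he))
    have hwe : 0 ≤ w e := hw e (SimpleGraph.mem_edgeFinset.mpr
      (W.edges_subset_edgeSet (hsub e (List.mem_toFinset.mp he))))
    rw [one_smul, nsmul_eq_mul]
    exact le_mul_of_one_le_left hwe (by exact_mod_cast h2)
  calc ∑ e ∈ (F.path a b).edges.toFinset, (F.path a b).edges.count e • w e
      ≤ ∑ e ∈ (F.path a b).edges.toFinset, W.edges.count e • w e := Finset.sum_le_sum h1
    _ ≤ ∑ e ∈ W.edges.toFinset, W.edges.count e • w e := by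
        apply Finset.sum_le_sum_of_subset_of_nonneg
        · intro e he
          exact List.mem_toFinset.mpr (hsub e (List.mem_toFinset.mp he))
        · intro e he _
          have hwe : 0 ≤ w e := hw e (SimpleGraph.mem_edgeFinset.mpr
            (W.edges_subset_edgeSet (List.mem_toFinset.mp he)))
          positivity

lemma dist_triangle (w : Sym2 F.V → ℝ) (hw : ∀ e ∈ F.G.edgeFinset, 0 ≤ w e) (a b c : F.V) :
    F.dist w a c ≤ F.dist w a b + F.dist w b c := by
  have := F.dist_le_wlen w hw ((F.path a b).append (F.path b c))
  rwa [SimpleGraph.Walk.edges_append, List.map_append, List.sum_append] at this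

lemma dist_adj_le (w : Sym2 F.V → ℝ) (hw : ∀ e ∈ F.G.edgeFinset, 0 ≤ w e) {x y : F.V}
    (hxy : F.G.Adj x y) (z : F.V) :
    F.dist w x z ≤ w s(x,y) + F.dist w y z := by
  have := F.dist_le_wlen w hw (SimpleGraph.Walk.cons hxy (F.path y z))
  rwa [SimpleGraph.Walk.edges_cons, List.map_cons, List.sum_cons] at this

end Frame

section ChainCost
variable {M : Type} {α : Type}

noncomputable def chainCost (d : α → α → ℝ) (f : M → α) : α → List M → α → ℝ
  | u, [], v => d u v
  | u, p :: t, v => d u (f p) + chainCost d f (f p) t v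

lemma chainCost_prepend (d : α → α → ℝ) (f : M → α) (x v : α) (l₁ l₂ : List M)
    (h : ∀ p ∈ l₁, f p = x) (hx : d x x = 0) :
    chainCost d f x (l₁ ++ l₂) v = chainCost d f x l₂ v := by
  induction l₁ with
  | nil => rfl
  | cons p t ih =>
    have hp : f p = x := h p List.mem_cons_self
    rw [List.cons_append, chainCost, hp, hx, zero_add]
    exact ih (fun q hq => h q (List.mem_cons_of_mem _ hq))

lemma chainCost_shift (d : α → α → ℝ) (f : M → α) (x y v : α) (c : ℝ) (l : List M)
    (h : ∀ z, d x z ≤ c + d y z) :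
    chainCost d f x l v ≤ c + chainCost d f y l v := by
  cases l with
  | nil => exact h v
  | cons p t =>
    rw [chainCost, chainCost, ← add_assoc]
    exact add_le_add_left (h (f p)) _
end ChainCost

namespace Frame
variable {M : Type} [Fintype M] (F : Frame M)

lemma exists_chain [DecidableEq M] (w : Sym2 F.V → ℝ) (hw : ∀ e ∈ F.G.edgeFinset, 0 ≤ w e) :
    ∀ {a b : F.V} (W : F.G.Walk a b) (S : Finset M), (∀ p ∈ S, F.ι p ∈ W.support) →
    ∃ l : List M, l.Nodup ∧ l.toFinset = S ∧
      chainCost (F.dist w) F.ι a l b ≤ (W.edges.map w).sum := by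
  classical
  intro a b W
  induction W with
  | @nil c =>
    intro S hS
    refine ⟨S.toList, S.nodup_toList, S.toList_toFinset, ?_⟩
    have hall : ∀ p ∈ S.toList, F.ι p = c := by
      intro p hp
      have := hS p (Finset.mem_toList.mp hp)
      simpa [SimpleGraph.Walk.support_nil] using this
    have : chainCost (F.dist w) F.ι c (S.toList ++ []) c = chainCost (F.dist w) F.ι c [] c :=
      chainCost_prepend _ _ _ _ _ _ hall (F.dist_self c)
    rw [List.append_nil] at this
    rw [this]
    simp [chainCost, F.dist_self c]
  | @cons x y z hxy W' ih =>
    intro S hS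
    set S1 := S.filter (fun p => F.ι p = x) with hS1
    set S2 := S.filter (fun p => F.ι p ≠ x) with hS2
    have hS2sup : ∀ p ∈ S2, F.ι p ∈ W'.support := by
      intro p hp
      rw [hS2, Finset.mem_filter] at hp
      have := hS p hp.1
      rw [SimpleGraph.Walk.support_cons] at this
      rcases List.mem_cons.mp this with h | h
      · exact absurd h hp.2
      · exact h
    obtain ⟨l₂, hl₂n, hl₂t, hl₂c⟩ := ih S2 hS2sup
    refine ⟨S1.toList ++ l₂, ?_, ?_, ?_⟩
    · rw [List.nodup_append]
      refine ⟨S1.nodup_toList, hl₂n, ?_⟩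
      intro p hp q hq hpq
      subst hpq
      rw [Finset.mem_toList, hS1, Finset.mem_filter] at hp
      have hq2 : p ∈ S2 := hl₂t ▸ List.mem_toFinset.mpr hq
      rw [hS2, Finset.mem_filter] at hq2
      exact hq2.2 hp.2
    · rw [List.toFinset_append, hl₂t, Finset.toList_toFinset, hS1, hS2]
      exact Finset.filter_union_filter_not_eq _ S
    · have h1 : chainCost (F.dist w) F.ι x (S1.toList ++ l₂) z
          = chainCost (F.dist w) F.ι x l₂ z := by
        apply chainCost_prepend
        · intro p hp
          rw [Finset.mem_toList, hS1, Finset.mem_filter] at hp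
          exact hp.2
        · exact F.dist_self x
      rw [h1]
      have h2 : chainCost (F.dist w) F.ι x l₂ z
          ≤ w s(x,y) + chainCost (F.dist w) F.ι y l₂ z :=
        chainCost_shift _ _ _ _ _ _ _ (fun z' => F.dist_adj_le w hw hxy z')
      rw [SimpleGraph.Walk.edges_cons, List.map_cons, List.sum_cons]
      exact h2.trans (add_le_add_right hl₂c _)

end Frame

section Closed
variable {M : Type} {α : Type}

lemma chainCost_closed (d : α → α → ℝ) (f : M → α) (p₀ : M) :
    ∀ (l : List M), l ≠ [] → ∀ (u v : α),
    chainCost d f u l v = d u (f (l.getD 0 p₀)) +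
      (∑ i ∈ Finset.range (l.length - 1), d (f (l.getD i p₀)) (f (l.getD (i+1) p₀))) +
      d (f (l.getD (l.length - 1) p₀)) v := by
  intro l
  induction l with
  | nil => intro h; exact absurd rfl h
  | cons p t ih =>
    intro _ u v
    cases t with
    | nil => simp [chainCost]
    | cons q t' =>
      have hne : (q :: t') ≠ [] := by simp
      rw [chainCost, ih hne (f p) v]
      have hlen : (p :: q :: t').length - 1 = ((q :: t').length - 1) + 1 := by
        simp
      rw [hlen, Finset.sum_range_succ']
      simp only [List.getD_cons_succ, List.getD_cons_zero]
      ring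
end Closed

lemma map_sum_getD {M : Type} (h : M → ℝ) (p₀ : M) :
    ∀ (l : List M), (l.map h).sum = ∑ i ∈ Finset.range l.length, h (l.getD i p₀) := by
  intro l
  induction l with
  | nil => simp
  | cons p t ih =>
    rw [List.map_cons, List.sum_cons, ih, List.length_cons, Finset.sum_range_succ']
    simp only [List.getD_cons_succ, List.getD_cons_zero]
    ring

theorem part2 {M : Type} [Fintype M] (ρ : M → M → ℝ) (hρ : IsPseudoMetric ρ)
    (F : Frame M) (w : Sym2 F.V → ℝ) (hf : F.IsFilling w ρ) :
    ∃ σ : Equiv.Perm M, IsCyclicOrder σ ∧ halfPerim ρ σ ≤ F.weight w := by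
  classical
  have hw := hf.1
  have hwnn : 0 ≤ F.weight w := Finset.sum_nonneg hw
  by_cases hcard : Fintype.card M ≤ 1
  · haveI : Subsingleton M := Fintype.card_le_one_iff_subsingleton.mp hcard
    refine ⟨1, fun p q => ⟨0, Subsingleton.elim _ _⟩, ?_⟩
    have : ∀ p : M, ρ p ((1 : Equiv.Perm M) p) = 0 := fun p => hρ.refl p
    rw [halfPerim, Finset.sum_congr rfl (fun p _ => this p)]
    simpa using hwnn
  · push_neg at hcard
    -- covering walk
    have hV : Nonempty F.V := F.tree.isConnected.nonempty
    obtain ⟨r⟩ := hV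
    obtain ⟨W, hWcov, hWcnt⟩ := exists_cover_walk (F.G.edgeSet.ncard) F.G
      F.tree.IsAcyclic le_rfl r
    have hcov : ∀ p ∈ (Finset.univ : Finset M), F.ι p ∈ W.support := fun p _ =>
      hWcov _ (F.tree.isConnected.preconnected r (F.ι p))
    obtain ⟨l, hln, hlt, hlc⟩ := F.exists_chain w hw W Finset.univ hcov
    -- walk length bound
    have hWlen : (W.edges.map w).sum ≤ 2 * F.weight w := by
      rw [Finset.sum_list_map_count]
      have hsub : W.edges.toFinset ⊆ F.G.edgeFinset := by
        intro e he
        exact SimpleGraph.mem_edgeFinset.mpr (W.edges_subset_edgeSet (List.mem_toFinset.mp he))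
      calc ∑ e ∈ W.edges.toFinset, W.edges.count e • w e
          ≤ ∑ e ∈ W.edges.toFinset, 2 * w e := by
            apply Finset.sum_le_sum
            intro e he
            rw [nsmul_eq_mul]
            have hwe : 0 ≤ w e := hw e (hsub he)
            have := hWcnt e
            have h2 : (W.edges.count e : ℝ) ≤ 2 := by exact_mod_cast this
            nlinarith
        _ ≤ ∑ e ∈ F.G.edgeFinset, 2 * w e := by
            apply Finset.sum_le_sum_of_subset_of_nonneg hsub
            intro e he _
            have := hw e he
            linarith
        _ = 2 * F.weight w := by rw [Frame.weight, Finset.mul_sum]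
    -- list facts
    have hk : l.length = Fintype.card M := by
      rw [← List.toFinset_card_of_nodup hln, hlt, Finset.card_univ]
    have hk2 : 2 ≤ l.length := hk ▸ hcard
    have hlne : l ≠ [] := by
      intro h; rw [h] at hk2; simp at hk2
    have hmem : ∀ p : M, p ∈ l := fun p => by
      rw [← List.mem_toFinset, hlt]; exact Finset.mem_univ p
    set p₀ : M := l.head hlne with hp₀
    set σ : Equiv.Perm M := l.formPerm with hσ
    have hcyc : IsCyclicOrder σ := by
      intro p q
      have hp : σ p ≠ p := (List.formPerm_apply_mem_ne_self_iff l hln p (hmem p)).mpr hk2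
      have hq : σ q ≠ q := (List.formPerm_apply_mem_ne_self_iff l hln q (hmem q)).mpr hk2
      exact (List.isCycle_formPerm hln hk2).exists_pow_eq hp hq
    refine ⟨σ, hcyc, ?_⟩
    -- index facts
    set k := l.length with hkdef
    have hk0 : 0 < k := by omega
    have happly : ∀ i < k, σ (l.getD i p₀) = l.getD ((i+1) % k) p₀ := by
      intro i hi
      have h1 : l.getD i p₀ = l[i] := List.getD_eq_getElem l p₀ hi
      have h2 : l.getD ((i+1) % k) p₀ = l[(i+1) % k]'(Nat.mod_lt _ hk0) :=
        List.getD_eq_getElem l p₀ (Nat.mod_lt _ hk0)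
      rw [h1, h2, hσ]
      exact List.formPerm_apply_getElem l hln i hi
    -- sum over M as list sum
    have hsum1 : ∑ p : M, ρ p (σ p) = (l.map (fun p => ρ p (σ p))).sum := by
      rw [Finset.sum_list_map_count]
      rw [hlt]
      apply Finset.sum_congr rfl
      intro p _
      rw [List.count_eq_one_of_mem hln (hmem p), one_smul]
    rw [halfPerim, div_le_iff₀ (by norm_num : (0:ℝ) < 2), hsum1,
      map_sum_getD _ p₀ l]
    set d := F.dist w with hd
    set f := F.ι with hfdef
    have hterm : ∀ i < k, ρ (l.getD i p₀) (σ (l.getD i p₀))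
        = ρ (l.getD i p₀) (l.getD ((i+1) % k) p₀) := by
      intro i hi; rw [happly i hi]
    have hsplit : ∑ i ∈ Finset.range k, ρ (l.getD i p₀) (σ (l.getD i p₀))
        = (∑ i ∈ Finset.range (k-1), ρ (l.getD i p₀) (l.getD (i+1) p₀))
          + ρ (l.getD (k-1) p₀) (l.getD 0 p₀) := by
      have hk' : k = (k - 1) + 1 := by omega
      rw [hk', Finset.sum_range_succ]
      congr 1
      · apply Finset.sum_congr rfl
        intro i hi
        rw [Finset.mem_range] at hi
        rw [hterm i (by omega), Nat.mod_eq_of_lt (by omega)]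
      · rw [hterm (k-1) (by omega)]
        have hkk : (k-1)+1 = k := by omega
        rw [hkk, Nat.mod_self]
    have hccl := chainCost_closed d f p₀ l hlne r r
    have hmain : (∑ i ∈ Finset.range (k-1), ρ (l.getD i p₀) (l.getD (i+1) p₀))
          + ρ (l.getD (k-1) p₀) (l.getD 0 p₀) ≤ chainCost d f r l r := by
      rw [hccl]
      have h1 : ∀ i ∈ Finset.range (k-1), ρ (l.getD i p₀) (l.getD (i+1) p₀)
          ≤ d (f (l.getD i p₀)) (f (l.getD (i+1) p₀)) := fun i _ => hf.2 _ _
      have h2 : ρ (l.getD (k-1) p₀) (l.getD 0 p₀)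
          ≤ d (f (l.getD (k-1) p₀)) r + d r (f (l.getD 0 p₀)) := by
        calc ρ (l.getD (k-1) p₀) (l.getD 0 p₀)
            ≤ d (f (l.getD (k-1) p₀)) (f (l.getD 0 p₀)) := hf.2 _ _
          _ ≤ d (f (l.getD (k-1) p₀)) r + d r (f (l.getD 0 p₀)) :=
              F.dist_triangle w hw _ _ _
      have := Finset.sum_le_sum h1
      linarith
    calc (∑ i ∈ Finset.range l.length, ρ (l.getD i p₀) (σ (l.getD i p₀)))
        = (∑ i ∈ Finset.range (k-1), ρ (l.getD i p₀) (l.getD (i+1) p₀))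
          + ρ (l.getD (k-1) p₀) (l.getD 0 p₀) := hsplit
      _ ≤ chainCost d f r l r := hmain
      _ ≤ (W.edges.map w).sum := hlc
      _ ≤ 2 * F.weight w := hWlen
      _ = F.weight w * 2 := mul_comm _ _

section Trivial
variable {M : Type} [Fintype M]

/-- Star graph centered at `m₀`. -/
def starG (m₀ : M) : SimpleGraph M where
  Adj x y := (x = m₀ ∨ y = m₀) ∧ x ≠ y
  symm := by constructor; intro x y ⟨h1, h2⟩; exact ⟨h1.symm, h2.symm⟩
  loopless := by constructor; intro x ⟨_, h⟩; exact h rfl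

lemma starG_isTree (m₀ : M) : (starG m₀).IsTree := by
  classical
  have hpre : (starG m₀).Preconnected := by
    intro x y
    have hx : (starG m₀).Reachable x m₀ := by
      by_cases h : x = m₀
      · subst h; exact SimpleGraph.Reachable.refl _
      · exact (SimpleGraph.Adj.reachable (by exact ⟨Or.inr rfl, h⟩))
    have hy : (starG m₀).Reachable y m₀ := by
      by_cases h : y = m₀
      · subst h; exact SimpleGraph.Reachable.refl _
      · exact (SimpleGraph.Adj.reachable (by exact ⟨Or.inr rfl, h⟩))
    exact hx.trans hy.symm
  constructor
  · rw [SimpleGraph.connected_iff]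
    exact ⟨hpre, ⟨m₀⟩⟩
  · intro v c hc
    have hlen := hc.three_le_length
    have hm₀ : m₀ ∈ c.support := by
      have hne : c.edges ≠ [] := by
        intro h
        have := c.length_edges
        rw [h] at this
        simp at this
        omega
      obtain ⟨e, he⟩ := List.exists_mem_of_ne_nil _ hne
      induction e using Sym2.ind with
      | _ a b =>
        have hadj : (starG m₀).Adj a b := c.adj_of_mem_edges he
        rcases hadj.1 with rfl | rfl
        · exact c.fst_mem_support_of_mem_edges he
        · exact c.snd_mem_support_of_mem_edges he
    set c' := c.rotate _ hm₀ with hc'def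
    have hc' : c'.IsCycle := hc.rotate hm₀
    have hlen' := hc'.three_le_length
    clear_value c'
    cases c' with
    | nil => simp at hlen'
    | @cons _ a _ h₁ q =>
      have ha : a ≠ m₀ := fun h => h₁.2 h.symm
      cases q with
      | nil => simp at hlen'
      | @cons _ b _ h₂ q₂ =>
        have hb : b = m₀ := by
          rcases h₂.1 with h | h
          · exact absurd h ha
          · exact h
        have hq₂len : 1 ≤ q₂.length := by
          simp only [SimpleGraph.Walk.length_cons] at hlen'
          omega
        have hq₂ : ¬ q₂.Nil := by
          intro h
          rw [SimpleGraph.Walk.nil_iff_length_eq] at h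
          omega
        have hnodup := hc'.support_nodup
        rw [SimpleGraph.Walk.support_cons, SimpleGraph.Walk.support_cons] at hnodup
        simp only [List.tail_cons] at hnodup
        cases q₂ with
        | nil => simp at hq₂
        | @cons _ d _ h₃ q₃ =>
          rw [SimpleGraph.Walk.support_cons] at hnodup
          have hm : m₀ ∈ q₃.support := SimpleGraph.Walk.end_mem_support q₃
          rw [List.nodup_cons, List.nodup_cons] at hnodup
          have hnb := hnodup.2.1
          rw [hb] at hnb
          exact hnb hm

end Trivial

section Build
variable {M : Type} [Fintype M]

/-- The star frame. -/
noncomputable def starFrame (m₀ : M) : Frame M where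
  V := M
  fin := inferInstance
  deq := Classical.decEq M
  G := starG m₀
  dec := Classical.decRel _
  tree := starG_isTree m₀
  ι := id
  inj := Function.injective_id
  joins := fun v _ => ⟨v, rfl⟩

lemma starFrame_isFilling (m₀ : M) (ρ : M → M → ℝ) (hρ : IsPseudoMetric ρ) :
    (starFrame m₀).IsFilling (fun _ => ∑ p : M, ∑ q : M, ρ p q) ρ := by
  set D : ℝ := ∑ p : M, ∑ q : M, ρ p q with hD
  have hDnn : 0 ≤ D :=
    Finset.sum_nonneg fun p _ => Finset.sum_nonneg fun q _ => hρ.nonneg p q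
  have hDge : ∀ p q : M, ρ p q ≤ D := by
    intro p q
    calc ρ p q ≤ ∑ q' : M, ρ p q' :=
          Finset.single_le_sum (fun q' _ => hρ.nonneg p q') (Finset.mem_univ q)
      _ ≤ D := Finset.single_le_sum (f := fun p' => ∑ q' : M, ρ p' q')
          (fun p' _ => Finset.sum_nonneg fun q' _ => hρ.nonneg p' q') (Finset.mem_univ p)
  have hw : ∀ e ∈ (starFrame m₀).G.edgeFinset, 0 ≤ (fun _ : Sym2 (starFrame m₀).V => D) e :=
    fun _ _ => hDnn
  refine ⟨hw, ?_⟩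
  intro p q
  by_cases hpq : p = q
  · subst hpq
    have := (starFrame m₀).dist_nonneg _ hw ((starFrame m₀).ι p) ((starFrame m₀).ι p)
    rw [hρ.refl]
    exact this
  · have hlen : 1 ≤ ((starFrame m₀).path ((starFrame m₀).ι p) ((starFrame m₀).ι q)).length := by
      by_contra h
      push_neg at h
      have h0 : ((starFrame m₀).path ((starFrame m₀).ι p) ((starFrame m₀).ι q)).length = 0 := by
        omega
      exact hpq (SimpleGraph.Walk.eq_of_length_eq_zero h0)
    rw [Frame.dist]
    have hmap : (((starFrame m₀).path ((starFrame m₀).ι p) ((starFrame m₀).ι q)).edges.map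
        (fun _ => D)) = List.replicate (((starFrame m₀).path ((starFrame m₀).ι p)
          ((starFrame m₀).ι q)).edges.length) D := List.map_const'
    rw [hmap, List.sum_replicate, SimpleGraph.Walk.length_edges, nsmul_eq_mul]
    calc ρ p q ≤ D := hDge p q
      _ = 1 * D := (one_mul D).symm
      _ ≤ _ := by
        apply mul_le_mul_of_nonneg_right _ hDnn
        exact_mod_cast hlen

/-- A trivial frame for empty `M`. -/
noncomputable def botFrame (hM : IsEmpty M) : Frame M where
  V := PUnit
  fin := inferInstance
  deq := inferInstance
  G := ⊥
  dec := fun _ _ => Decidable.isFalse (fun h => h)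
  tree := by
    constructor
    · rw [SimpleGraph.connected_iff]
      exact ⟨fun x y => by rw [Subsingleton.elim x y], ⟨PUnit.unit⟩⟩
    · exact SimpleGraph.isAcyclic_bot
  ι := fun p => (hM.false p).elim
  inj := fun p => (hM.false p).elim
  joins := by
    intro v h
    rw [SimpleGraph.bot_degree] at h
    omega

lemma exists_filling (ρ : M → M → ℝ) (hρ : IsPseudoMetric ρ) :
    ∃ (F : Frame M) (w : Sym2 F.V → ℝ), F.IsFilling w ρ := by
  by_cases hM : Nonempty M
  · obtain ⟨m₀⟩ := hM
    exact ⟨starFrame m₀, _, starFrame_isFilling m₀ ρ hρ⟩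
  · refine ⟨botFrame (not_nonempty_iff.mp hM), fun _ => 0, fun _ _ => le_refl 0, ?_⟩
    intro p
    exact ((not_nonempty_iff.mp hM).false p).elim

end Build

theorem stmt6 {M : Type} [Fintype M] (ρ : M → M → ℝ) (hρ : IsPseudoMetric ρ) :
    (∀ (F : Frame M) (w : Sym2 F.V → ℝ), F.IsFilling w ρ →
      ∀ π : Equiv.Perm M, F.IsTour π → halfPerim ρ π ≤ F.weight w) ∧
    halfPerimSpace ρ ≤ mf ρ := by
  constructor
  · intro F w hf π hπ
    exact part1 ρ F w hf π hπ
  · have hbdd : BddBelow { x | ∃ σ : Equiv.Perm M, IsCyclicOrder σ ∧ x = halfPerim ρ σ } := by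
      refine ⟨0, ?_⟩
      rintro x ⟨σ, _, rfl⟩
      have : 0 ≤ ∑ p : M, ρ p (σ p) := Finset.sum_nonneg fun p _ => hρ.nonneg _ _
      rw [halfPerim]
      linarith
    have hne : { x | ∃ F : Frame M, ∃ w : Sym2 F.V → ℝ, F.IsFilling w ρ ∧ F.weight w = x }.Nonempty := by
      obtain ⟨F, w, hf⟩ := exists_filling ρ hρ
      exact ⟨F.weight w, F, w, hf, rfl⟩
    rw [mf, halfPerimSpace]
    apply le_csInf hne
    rintro x ⟨F, w, hf, rfl⟩
    obtain ⟨σ, hσ, hle⟩ := part2 ρ hρ F w hf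
    exact le_trans (csInf_le hbdd ⟨σ, hσ, rfl⟩) hle
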